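/- Let n ≥ 2, let f(x) ∈ ℚ[x] with deg f(x) < n, and suppose the n-th cyclotomic polynomial Φ_n(x) divides f(x) in ℚ[x]. Let p_1 < … < p_m be all the distinct prime factors of n. Then there exist polynomials h_{n/p_1}(x), …, h_{n/p_m}(x) ∈ ℚ[x] with deg h_{n/p_j}(x) < n/p_j for each j, such that f(x) = Σ_{j=1}^{m} h_{n/p_j}(x) · G(n, n/p_j; x). -/

import Mathlib

open Polynomial

/-- The fundamental `r`-recurrent polynomial with respect to `n`:
`G(n,r;x) = 1 + x^r + x^{2r} + ⋯ + x^{n-r} = (x^n - 1)/(x^r - 1)`. -/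
noncomputable def Gpoly (R : Type*) [Semiring R] (n r : ℕ) : Polynomial R :=
  ∑ l ∈ Finset.range (n / r), X ^ (l * r)

lemma XpowSub (n : ℕ) (hn : 0 < n) :
    ((X : ℚ[X]) ^ n - 1).degree = (n : WithBot ℕ) ∧ ((X : ℚ[X]) ^ n - 1) ≠ 0 := by
  rw [← C_1]
  exact ⟨degree_X_pow_sub_C hn 1, X_pow_sub_C_ne_zero hn 1⟩

lemma Gmul (n r : ℕ) (hr : r ∣ n) : Gpoly ℚ n r * (X ^ r - 1) = X ^ n - 1 := by
  have h : Gpoly ℚ n r = ∑ l ∈ Finset.range (n / r), (X ^ r : ℚ[X]) ^ l := by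
    unfold Gpoly
    refine Finset.sum_congr rfl fun l _ => ?_
    rw [← pow_mul, mul_comm]
  rw [h, geom_sum_mul, ← pow_mul, mul_comm, Nat.div_mul_cancel hr]

lemma Gdeg (n r : ℕ) (hr : r ∣ n) (hn : 0 < n) (h0 : 0 < r) :
    (Gpoly ℚ n r).degree = ((n - r : ℕ) : WithBot ℕ) := by
  have hx := XpowSub r h0
  have hxn := XpowSub n hn
  have hG := Gmul n r hr
  have hne : Gpoly ℚ n r ≠ 0 := by
    intro h; rw [h, zero_mul] at hG; exact hxn.2 hG.symm
  have hd := congrArg Polynomial.degree hG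
  rw [degree_mul, hx.1, hxn.1, degree_eq_natDegree hne] at hd
  have hle : r ≤ n := Nat.le_of_dvd hn hr
  have : (Gpoly ℚ n r).natDegree + r = n := by exact_mod_cast hd
  rw [degree_eq_natDegree hne, (by omega : (Gpoly ℚ n r).natDegree = n - r)]

lemma coprime_X_pow_sub_one {n m : ℕ} (hm : 0 < m) (hne : m < n) :
    IsCoprime (cyclotomic n ℚ) ((X : ℚ[X]) ^ m - 1) := by
  rw [← prod_cyclotomic_eq_X_pow_sub_one hm ℚ]
  refine IsCoprime.prod_right fun d hd => cyclotomic.isCoprime_rat ?_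
  have := Nat.le_of_dvd hm (Nat.mem_divisors.mp hd).1
  omega

lemma cyclo_dvd_X_pow_sub_one {d m : ℕ} (hm : 0 < m) (hd : d ∣ m) :
    (cyclotomic d ℚ) ∣ (X : ℚ[X]) ^ m - 1 := by
  rw [← prod_cyclotomic_eq_X_pow_sub_one hm ℚ]
  exact Finset.dvd_prod_of_mem _ (Nat.mem_divisors.mpr ⟨hd, hm.ne'⟩)

lemma npdvd {n p : ℕ} (hn : 2 ≤ n) (hp : p ∈ n.primeFactors) :
    (n / p) ∣ n ∧ 0 < n / p ∧ n / p < n := by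
  obtain ⟨hp1, hp2, _⟩ := Nat.mem_primeFactors.mp hp
  have hn0 : 0 < n := by omega
  refine ⟨Nat.div_dvd_of_dvd hp2, Nat.div_pos (Nat.le_of_dvd hn0 hp2) hp1.pos, ?_⟩
  exact Nat.div_lt_self hn0 hp1.one_lt

lemma span_cyclotomic (n : ℕ) (hn : 2 ≤ n) :
    ∃ a : ℕ → ℚ[X], cyclotomic n ℚ = ∑ p ∈ n.primeFactors, a p * Gpoly ℚ n (n / p) := by
  have hn0 : 0 < n := by omega
  have hGdvd : ∀ p ∈ n.primeFactors, Gpoly ℚ n (n / p) ∣ (X:ℚ[X])^n - 1 := by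
    intro p hp
    exact ⟨_, (Gmul n (n/p) (npdvd hn hp).1).symm⟩
  set t : Finset ℚ[X] := n.primeFactors.image (fun p => Gpoly ℚ n (n / p)) with ht
  set I : Ideal ℚ[X] := Ideal.span (t : Set ℚ[X]) with hI
  obtain ⟨g, hgspan⟩ : ∃ g : ℚ[X], I = Ideal.span {g} :=
    ⟨_, (Ideal.span_singleton_generator I).symm⟩
  have hmemI : ∀ x, x ∈ I ↔ g ∣ x := by
    intro x
    rw [hgspan, Ideal.mem_span_singleton]
  have hgG : ∀ p ∈ n.primeFactors, g ∣ Gpoly ℚ n (n / p) := by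
    intro p hp
    rw [← hmemI]
    exact Ideal.subset_span (Finset.mem_coe.mpr (Finset.mem_image_of_mem _ hp))
  have hpfne : n.primeFactors.Nonempty := Nat.nonempty_primeFactors.mpr (by omega : 1 < n)
  obtain ⟨p0, hp0⟩ := hpfne
  have hgX : g ∣ (X:ℚ[X])^n - 1 := (hgG p0 hp0).trans (hGdvd p0 hp0)
  have hXsf : Squarefree ((X:ℚ[X])^n - 1) :=
    (X_pow_sub_one_separable_iff.mpr (by exact_mod_cast hn0.ne' : (n:ℚ) ≠ 0)).squarefree
  have hg0 : g ≠ 0 := by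
    rintro rfl
    exact (XpowSub n hn0).2 (zero_dvd_iff.mp hgX)
  have hgsf : Squarefree g := hXsf.squarefree_of_dvd hgX
  have hirr : ∀ q : ℚ[X], Irreducible q → q ∣ g → Associated q (cyclotomic n ℚ) := by
    intro q hq hqg
    have hqpr : Prime q := (UniqueFactorizationMonoid.irreducible_iff_prime).mp hq
    have hqX : q ∣ ∏ d ∈ n.divisors, cyclotomic d ℚ := by
      rw [prod_cyclotomic_eq_X_pow_sub_one hn0 ℚ]
      exact hqg.trans hgX
    obtain ⟨d, hd, hqd⟩ := hqpr.exists_mem_finset_dvd hqX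
    obtain ⟨hddvd, -⟩ := Nat.mem_divisors.mp hd
    by_cases hdn : d = n
    · subst hdn
      exact hq.associated_of_dvd (cyclotomic.irreducible_rat hn0) hqd
    · exfalso
      have hnd : 2 ≤ n / d := by
        have h1 : 0 < d := Nat.pos_of_dvd_of_pos hddvd hn0
        obtain ⟨k, hk⟩ := hddvd
        have hk0 : k ≠ 0 := by rintro rfl; simp at hk; omega
        have hk1 : k ≠ 1 := by rintro rfl; simp at hk; exact hdn hk.symm
        rw [hk, Nat.mul_div_cancel_left _ h1]
        omega
      obtain ⟨p, hpp, hpd⟩ := (n / d).exists_prime_and_dvd (by omega)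
      have hpn : p ∈ n.primeFactors :=
        Nat.mem_primeFactors.mpr ⟨hpp, hpd.trans (Nat.div_dvd_of_dvd hddvd), hn0.ne'⟩
      have hdnp : d ∣ n / p := by
        obtain ⟨k, hk⟩ := hpd
        have hnn : n = p * (d * k) := by
          rw [← Nat.mul_div_cancel' hddvd, hk]; ring
        rw [hnn, Nat.mul_div_cancel_left _ hpp.pos]
        exact ⟨k, rfl⟩
      have hnp := npdvd hn hpn
      have h1 : q ∣ (X:ℚ[X])^(n/p) - 1 :=
        hqd.trans (cyclo_dvd_X_pow_sub_one hnp.2.1 hdnp)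
      have h2 : q ∣ Gpoly ℚ n (n / p) := hqg.trans (hgG p hpn)
      have : q * q ∣ (X:ℚ[X])^n - 1 := by
        rw [← Gmul n (n/p) hnp.1]
        exact mul_dvd_mul h2 h1
      exact hq.not_isUnit (hXsf q this)
  have hgdvdc : g ∣ cyclotomic n ℚ := by
    by_cases hu : IsUnit g
    · exact hu.dvd
    · obtain ⟨q, hq, hqg⟩ := WfDvdMonoid.exists_irreducible_factor hu hg0
      have h1 : cyclotomic n ℚ ∣ g := ((hirr q hq hqg).symm.dvd).trans hqg
      obtain ⟨g', hg'⟩ := h1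
      by_cases hu' : IsUnit g'
      · obtain ⟨u, rfl⟩ := hu'
        exact ⟨(u⁻¹ : ℚ[X]ˣ), by rw [hg', mul_assoc]; simp⟩
      · exfalso
        have hg'0 : g' ≠ 0 := by rintro rfl; simp at hg'; exact hg0 hg'
        obtain ⟨q', hq', hq'g⟩ := WfDvdMonoid.exists_irreducible_factor hu' hg'0
        have : cyclotomic n ℚ ∣ g' :=
          ((hirr q' hq' (hq'g.trans ⟨cyclotomic n ℚ, by rw [hg', mul_comm]⟩)).symm.dvd).trans hq'g
        obtain ⟨c, hc⟩ := this
        have : cyclotomic n ℚ * cyclotomic n ℚ ∣ g := ⟨c, by rw [hg', hc, mul_assoc]⟩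
        exact (cyclotomic.irreducible_rat hn0).not_isUnit (hgsf _ this)
  have hcI : cyclotomic n ℚ ∈ I := by
    obtain ⟨c, hc⟩ := hgdvdc
    rw [hc, hgspan]
    exact Ideal.mul_mem_right _ _ (Ideal.mem_span_singleton_self g)
  rw [hI, Ideal.span, Submodule.mem_span_finset] at hcI
  obtain ⟨c, -, hc⟩ := hcI
  have hinj : ∀ p ∈ n.primeFactors, ∀ q ∈ n.primeFactors,
      Gpoly ℚ n (n / p) = Gpoly ℚ n (n / q) → p = q := by
    intro p hp q hq heq
    have h1 := npdvd hn hp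
    have h2 := npdvd hn hq
    have := congrArg Polynomial.degree heq
    rw [Gdeg n (n/p) h1.1 hn0 h1.2.1, Gdeg n (n/q) h2.1 hn0 h2.2.1] at this
    have heq2 : n - n / p = n - n / q := by exact_mod_cast this
    have : n / p = n / q := by omega
    have hpn := (Nat.mem_primeFactors.mp hp).2.1
    have hqn := (Nat.mem_primeFactors.mp hq).2.1
    rw [← Nat.div_div_self hpn hn0.ne', ← Nat.div_div_self hqn hn0.ne', this]
  refine ⟨fun p => c (Gpoly ℚ n (n / p)), ?_⟩
  rw [← hc, ht, Finset.sum_image hinj]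
  simp [smul_eq_mul]

theorem stmt_9 (n : ℕ) (hn : 2 ≤ n) (f : Polynomial ℚ)
    (hdeg : f.degree < (n : WithBot ℕ)) (hdvd : cyclotomic n ℚ ∣ f) :
    ∃ h : ℕ → Polynomial ℚ,
      (∀ p ∈ n.primeFactors, (h p).degree < ((n / p : ℕ) : WithBot ℕ)) ∧
      f = ∑ p ∈ n.primeFactors, h p * Gpoly ℚ n (n / p) := by
  have hn0 : 0 < n := by omega
  obtain ⟨a, ha⟩ := span_cyclotomic n hn
  obtain ⟨w, hw⟩ := hdvd
  have hf : f = (∑ p ∈ n.primeFactors, a p * Gpoly ℚ n (n / p)) * w := by rw [← ha, ← hw]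
  set Q : ℕ → ℚ[X] := fun p => X ^ (n / p) - 1 with hQ
  have hQmonic : ∀ p ∈ n.primeFactors, Monic (Q p) := by
    intro p hp
    have := monic_X_pow_sub_C (1 : ℚ) (npdvd hn hp).2.1.ne'
    rwa [C_1] at this
  set b : ℕ → ℚ[X] := fun p => w * a p with hb
  set h : ℕ → ℚ[X] := fun p => b p %ₘ Q p with hh
  have hdegh : ∀ p ∈ n.primeFactors, (h p).degree < ((n / p : ℕ) : WithBot ℕ) := by
    intro p hp
    have := degree_modByMonic_lt (b p) (hQmonic p hp)
    rwa [hQ, ← C_1, degree_X_pow_sub_C (npdvd hn hp).2.1] at this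
  refine ⟨h, hdegh, ?_⟩
  have hf2 : f = ∑ p ∈ n.primeFactors, b p * Gpoly ℚ n (n / p) := by
    rw [hf, Finset.sum_mul]
    exact Finset.sum_congr rfl fun p _ => by ring
  set D : ℚ[X] := f - ∑ p ∈ n.primeFactors, h p * Gpoly ℚ n (n / p) with hD
  have hDeq : D = ((X:ℚ[X])^n - 1) * ∑ p ∈ n.primeFactors, (b p /ₘ Q p) := by
    rw [hD, hf2, ← Finset.sum_sub_distrib, Finset.mul_sum]
    refine Finset.sum_congr rfl fun p hp => ?_
    have hmd := modByMonic_add_div (b p) (Q p)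
    have : b p - h p = Q p * (b p /ₘ Q p) := by rw [hh]; simp only []; linear_combination -hmd
    rw [← sub_mul, this, ← Gmul n (n/p) (npdvd hn hp).1]
    ring
  have hsum : (∑ p ∈ n.primeFactors, h p * Gpoly ℚ n (n / p)).degree < (n : WithBot ℕ) := by
    refine lt_of_le_of_lt (degree_sum_le _ _) ?_
    rw [Finset.sup_lt_iff (by exact_mod_cast WithBot.bot_lt_coe n)]
    intro p hp
    rcases eq_or_ne (h p) 0 with h0 | h0
    · rw [h0, zero_mul, degree_zero]
      exact WithBot.bot_lt_coe n
    · have hnpd := npdvd hn hp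
      rw [degree_mul, Gdeg n (n/p) hnpd.1 hn0 hnpd.2.1, degree_eq_natDegree h0]
      have h1 : (h p).natDegree < n / p := (natDegree_lt_iff_degree_lt h0).mpr (hdegh p hp)
      have : ((h p).natDegree : WithBot ℕ) + ((n - n/p : ℕ) : WithBot ℕ)
          = (((h p).natDegree + (n - n/p) : ℕ) : WithBot ℕ) := by exact_mod_cast rfl
      rw [this]
      have h2 : n / p ≤ n := le_of_lt hnpd.2.2
      exact_mod_cast (by omega : (h p).natDegree + (n - n/p) < n)
  have hDdeg : D.degree < (n : WithBot ℕ) :=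
    lt_of_le_of_lt (degree_sub_le _ _) (max_lt hdeg hsum)
  have hDzero : D = 0 := by
    refine eq_zero_of_dvd_of_degree_lt ⟨_, hDeq⟩ ?_
    rw [← C_1, degree_X_pow_sub_C hn0]
    exact hDdeg
  exact sub_eq_zero.mp hDzero
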